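/- Fix ρ ∈ [1,2] and z ∈ [0,1). Then the function H_{z,ρ}(t) = h(ρ, g⁻¹(ρ,t), z) is convex on the interval [2^{−ρ}, 1]. -/

import Mathlib

open Real

/-- Gallager's `g` function: `g ρ z = ((1/2)(1+z)^{1/(1+ρ)} + (1/2)(1-z)^{1/(1+ρ)})^{1+ρ}`. -/
noncomputable def g (ρ z : ℝ) : ℝ :=
  ((1/2) * (1 + z) ^ (1/(1+ρ)) + (1/2) * (1 - z) ^ (1/(1+ρ))) ^ (1+ρ)

/-- Gallager's `E0` of a binary-input channel `W` (input `false` is 0, `true` is 1)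
under the uniform input distribution. -/
noncomputable def E0 {Y : Type*} [Fintype Y] (ρ : ℝ) (W : Bool → Y → ℝ) : ℝ :=
  - Real.log (∑ y, ((1/2) * (W false y) ^ (1/(1+ρ)) + (1/2) * (W true y) ^ (1/(1+ρ))) ^ (1+ρ))

/-- `q_W(y) = (W(y|0)+W(y|1))/2`. -/
noncomputable def qW {Y : Type*} (W : Bool → Y → ℝ) (y : Y) : ℝ :=
  (W false y + W true y) / 2

/-- `Δ_W(y) = (W(y|0) - W(y|1))/(W(y|0)+W(y|1))`. -/
noncomputable def ΔW {Y : Type*} (W : Bool → Y → ℝ) (y : Y) : ℝ :=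
  (W false y - W true y) / (W false y + W true y)

/-- The minus polar transform of two channels. -/
noncomputable def Wminus {Y1 Y2 : Type*} (W1 : Bool → Y1 → ℝ) (W2 : Bool → Y2 → ℝ) :
    Bool → Y1 × Y2 → ℝ :=
  fun u1 y => ∑ u2 : Bool, (1/2) * W1 (xor u1 u2) y.1 * W2 u2 y.2

/-- The plus polar transform of two channels; output is `(y1, y2, u1)`. -/
noncomputable def Wplus {Y1 Y2 : Type*} (W1 : Bool → Y1 → ℝ) (W2 : Bool → Y2 → ℝ) :
    Bool → Y1 × Y2 × Bool → ℝ :=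
  fun u2 y => (1/2) * W1 (xor y.2.2 u2) y.1 * W2 u2 y.2.1

/-- The function `h(ρ, z1, z2)` from the `W⁺` representation. -/
noncomputable def hfun (ρ z1 z2 : ℝ) : ℝ :=
  (1/2) * (1 + z1*z2) * g ρ ((z1 + z2)/(1 + z1*z2))
    + (1/2) * (1 - z1*z2) * g ρ ((z1 - z2)/(1 - z1*z2))

set_option linter.unusedSectionVars false
set_option linter.deprecated false
set_option linter.unusedVariables false


/-- sinh-type inequality: for `τ ≥ 1`, `L ∈ [0,1]`: `τ^L - τ⁻¹^L ≤ L (τ - τ⁻¹)`. -/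
lemma sinh_ineq {τ L : ℝ} (hτ : 1 ≤ τ) (hL0 : 0 ≤ L) (hL1 : L ≤ 1) :
    τ ^ L - (τ ^ L)⁻¹ ≤ L * (τ - τ⁻¹) := by
  have hτ0 : (0:ℝ) < τ := lt_of_lt_of_le one_pos hτ
  set c := Real.log τ with hc
  have hc0 : 0 ≤ c := Real.log_nonneg hτ
  set f : ℝ → ℝ := fun t => Real.exp (c * t) - Real.exp (-(c * t)) with hf
  have hd : ∀ t : ℝ, HasDerivAt f (c * Real.exp (c * t) + c * Real.exp (-(c * t))) t := by
    intro t
    have h1 : HasDerivAt (fun t : ℝ => c * t) c t := by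
      simpa using (hasDerivAt_id t).const_mul c
    have h2 := h1.exp
    have h3 := (h1.neg).exp
    exact (h2.sub h3).congr_deriv (by simp only [Pi.neg_apply]; ring)
  have hd2 : ∀ t : ℝ, HasDerivAt (fun t => c * Real.exp (c * t) + c * Real.exp (-(c * t)))
      (c * (c * Real.exp (c * t)) + c * (-c * Real.exp (-(c * t)))) t := by
    intro t
    have h1 : HasDerivAt (fun t : ℝ => c * t) c t := by
      simpa using (hasDerivAt_id t).const_mul c
    exact ((h1.exp.const_mul c)).add (((h1.neg).exp.const_mul c)) |>.congr_deriv (by simp only [Pi.neg_apply]; ring)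
  have hconv : ConvexOn ℝ (Set.Icc (0:ℝ) 1) f := by
    apply convexOn_of_deriv2_nonneg (convex_Icc 0 1)
    · exact (Continuous.continuousOn (by fun_prop))
    · intro t ht
      exact ((hd t).differentiableAt).differentiableWithinAt
    · intro t ht
      have : deriv f = fun t => c * Real.exp (c * t) + c * Real.exp (-(c * t)) := by
        funext t; exact (hd t).deriv
      rw [this]
      exact ((hd2 t).differentiableAt).differentiableWithinAt
    · intro t ht
      rw [interior_Icc] at ht
      have h1 : deriv f = fun t => c * Real.exp (c * t) + c * Real.exp (-(c * t)) := by
        funext t; exact (hd t).deriv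
      have h2 : deriv (deriv f) t = c * (c * Real.exp (c * t)) + c * (-c * Real.exp (-(c * t))) := by
        rw [h1]; exact (hd2 t).deriv
      have : deriv^[2] f t = deriv (deriv f) t := by
        simp [Function.iterate_succ, Function.comp]
      rw [this, h2]
      have hxe : Real.exp (-(c*t)) ≤ Real.exp (c*t) := by
        apply Real.exp_le_exp.2
        nlinarith [ht.1, hc0]
      nlinarith [Real.exp_pos (c*t), Real.exp_pos (-(c*t)), sq_nonneg c]
  have key := hconv.2 (Set.mem_Icc.mpr ⟨le_refl 0, zero_le_one⟩)
      (Set.mem_Icc.mpr ⟨zero_le_one, le_refl 1⟩) (by linarith : (0:ℝ) ≤ 1 - L) hL0 (by ring)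
  -- key : f ((1-L) • 0 + L • 1) ≤ (1-L) * f 0 + L * f 1
  have e0 : f 0 = 0 := by simp [hf]
  have e1 : f 1 = τ - τ⁻¹ := by
    simp only [hf, mul_one]
    rw [Real.exp_log hτ0, Real.exp_neg, Real.exp_log hτ0]
  have eL : f ((1-L) • (0:ℝ) + L • 1) = τ ^ L - (τ ^ L)⁻¹ := by
    have : (1-L) • (0:ℝ) + L • 1 = L := by simp
    rw [this]
    simp only [hf]
    rw [Real.rpow_def_of_pos hτ0, ← Real.exp_neg]
  rw [e0, e1, eL] at key
  simp only [smul_eq_mul, mul_zero, zero_add] at key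
  linarith


lemma core_ineq {A B L : ℝ} (hB : 0 < B) (hBA : B ≤ A) (hL0 : 0 ≤ L) (hL1 : L ≤ 1) :
    A * B * ((A ^ L) ^ 2 - (B ^ L) ^ 2) ≤ L * (A ^ 2 - B ^ 2) * (A ^ L * B ^ L) := by
  have hA : 0 < A := lt_of_lt_of_le hB hBA
  have hτ : 1 ≤ A / B := (one_le_div hB).2 hBA
  have h := sinh_ineq hτ hL0 hL1
  have hdiv : (A / B) ^ L = A ^ L / B ^ L := Real.div_rpow hA.le hB.le L
  have hALpos : 0 < A ^ L := Real.rpow_pos_of_pos hA L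
  have hBLpos : 0 < B ^ L := Real.rpow_pos_of_pos hB L
  rw [hdiv] at h
  have h2 : A ^ L / B ^ L - (A ^ L / B ^ L)⁻¹ ≤ L * (A / B - (A/B)⁻¹) := h
  rw [inv_div, inv_div, div_sub_div _ _ (ne_of_gt hBLpos) (ne_of_gt hALpos),
    div_sub_div _ _ (ne_of_gt hB) (ne_of_gt hA)] at h2
  have h3 := mul_le_mul_of_nonneg_right h2 (by positivity : (0:ℝ) ≤ (B ^ L * A ^ L) * (B * A))
  rw [div_mul_eq_mul_div, mul_comm (L * ((A * A - B * B) / (B * A)))] at h3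
  have h4 : (A ^ L * A ^ L - B ^ L * B ^ L) * (B * A) ≤ L * ((A * A - B * B)) * (B ^ L * A ^ L) := by
    have e1 : (A ^ L * A ^ L - B ^ L * B ^ L) * (B ^ L * A ^ L * (B * A)) / (B ^ L * A ^ L)
        = (A ^ L * A ^ L - B ^ L * B ^ L) * (B * A) := by
      field_simp
    have e2 : B ^ L * A ^ L * (B * A) * (L * ((A * A - B * B) / (B * A)))
        = L * (A * A - B * B) * (B ^ L * A ^ L) := by
      field_simp
    rw [e1, e2] at h3; exact h3
  nlinarith [h4]


noncomputable def chi (ρ V : ℝ) : ℝ := ((1+V)^(1+ρ) + (1-V)^(1+ρ))/2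
noncomputable def chi1 (ρ V : ℝ) : ℝ := (1+ρ) * ((1+V)^ρ - (1-V)^ρ)/2
noncomputable def chi2 (ρ V : ℝ) : ℝ := (1+ρ) * (ρ * ((1+V)^(ρ-1) + (1-V)^(ρ-1)))/2
noncomputable def chi3 (ρ V : ℝ) : ℝ := (1+ρ) * (ρ * ((ρ-1) * ((1+V)^(ρ-2) - (1-V)^(ρ-2))))/2

section chiDeriv
variable {ρ V : ℝ}

lemma hasDerivAt_chi (hρ : 1 ≤ ρ) (h1 : -1 < V) (h2 : V < 1) :
    HasDerivAt (chi ρ) (chi1 ρ V) V := by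
  have ha : HasDerivAt (fun V : ℝ => 1 + V) 1 V := by simpa using (hasDerivAt_id V).const_add 1
  have hb : HasDerivAt (fun V : ℝ => 1 - V) (-1) V := by simpa using (hasDerivAt_id V).const_sub 1
  have hA : (0:ℝ) < 1 + V := by linarith
  have hB : (0:ℝ) < 1 - V := by linarith
  have h1' := ha.rpow_const (p := 1+ρ) (Or.inl hA.ne')
  have h2' := hb.rpow_const (p := 1+ρ) (Or.inl hB.ne')
  have := (h1'.add h2').div_const 2
  have e : 1 + ρ - 1 = ρ := by ring
  exact this.congr_deriv (by rw [e]; unfold chi1; ring)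

lemma hasDerivAt_chi1 (hρ : 1 ≤ ρ) (h1 : -1 < V) (h2 : V < 1) :
    HasDerivAt (chi1 ρ) (chi2 ρ V) V := by
  have ha : HasDerivAt (fun V : ℝ => 1 + V) 1 V := by simpa using (hasDerivAt_id V).const_add 1
  have hb : HasDerivAt (fun V : ℝ => 1 - V) (-1) V := by simpa using (hasDerivAt_id V).const_sub 1
  have hA : (0:ℝ) < 1 + V := by linarith
  have hB : (0:ℝ) < 1 - V := by linarith
  have h1' := ha.rpow_const (p := ρ) (Or.inl hA.ne')
  have h2' := hb.rpow_const (p := ρ) (Or.inl hB.ne')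
  have := ((h1'.sub h2').const_mul (1+ρ)).div_const 2
  exact this.congr_deriv (by unfold chi2; ring)

lemma hasDerivAt_chi2 (hρ : 1 ≤ ρ) (h1 : -1 < V) (h2 : V < 1) :
    HasDerivAt (chi2 ρ) (chi3 ρ V) V := by
  have ha : HasDerivAt (fun V : ℝ => 1 + V) 1 V := by simpa using (hasDerivAt_id V).const_add 1
  have hb : HasDerivAt (fun V : ℝ => 1 - V) (-1) V := by simpa using (hasDerivAt_id V).const_sub 1
  have hA : (0:ℝ) < 1 + V := by linarith
  have hB : (0:ℝ) < 1 - V := by linarith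
  have h1' := ha.rpow_const (p := ρ-1) (Or.inl hA.ne')
  have h2' := hb.rpow_const (p := ρ-1) (Or.inl hB.ne')
  have := (((h1'.add h2').const_mul ρ).const_mul (1+ρ)).div_const 2
  have e : ρ - 1 - 1 = ρ - 2 := by ring
  exact this.congr_deriv (by rw [e]; unfold chi3; ring)

lemma chi_pos (hρ : 1 ≤ ρ) (h1 : -1 < V) (h2 : V ≤ 1) : 0 < chi ρ V := by
  unfold chi
  have hA : (0:ℝ) < 1 + V := by linarith
  have : (0:ℝ) < (1+V)^(1+ρ) := Real.rpow_pos_of_pos hA _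
  have h2' : (0:ℝ) ≤ (1-V)^(1+ρ) := Real.rpow_nonneg (by linarith) _
  linarith

lemma chi1_pos (hρ : 1 ≤ ρ) (h1 : 0 < V) (h2 : V ≤ 1) : 0 < chi1 ρ V := by
  unfold chi1
  have key : (1-V)^ρ < (1+V)^ρ :=
    Real.rpow_lt_rpow (by linarith) (by linarith) (by linarith)
  have : (0:ℝ) < 1 + ρ := by linarith
  have h3 : (0:ℝ) < (1+V)^ρ - (1-V)^ρ := by linarith
  positivity

lemma chi1_nonneg (hρ : 1 ≤ ρ) (h1 : 0 ≤ V) (h2 : V ≤ 1) : 0 ≤ chi1 ρ V := by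
  unfold chi1
  have key : (1-V)^ρ ≤ (1+V)^ρ :=
    Real.rpow_le_rpow (by linarith) (by linarith) (by linarith)
  nlinarith

lemma chi2_pos (hρ : 1 ≤ ρ) (h1 : -1 < V) (h2 : V < 1) : 0 < chi2 ρ V := by
  unfold chi2
  have hA : (0:ℝ) < (1+V)^(ρ-1) := Real.rpow_pos_of_pos (by linarith) _
  have hB : (0:ℝ) < (1-V)^(ρ-1) := Real.rpow_pos_of_pos (by linarith) _
  have : (0:ℝ) < ρ := by linarith
  have : (0:ℝ) < 1+ρ := by linarith
  positivity
end chiDeriv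


lemma E_ineq {ρ m : ℝ} (hρ1 : 1 ≤ ρ) (hρ2 : ρ ≤ 2) (hm0 : 0 < m) (hm1 : m < 1) :
    (chi2 ρ m + m * chi3 ρ m) * chi1 ρ m ≤ m * (chi2 ρ m)^2 := by
  set A : ℝ := 1 + m with hA
  set B : ℝ := 1 - m with hB
  have hApos : (0:ℝ) < A := by simp [hA]; linarith
  have hBpos : (0:ℝ) < B := by simp [hB]; linarith
  set AL : ℝ := A ^ (ρ - 1) with hAL
  set BL : ℝ := B ^ (ρ - 1) with hBL
  have hALpos : 0 < AL := Real.rpow_pos_of_pos hApos _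
  have hBLpos : 0 < BL := Real.rpow_pos_of_pos hBpos _
  have eA : A ^ ρ = AL * A := by
    rw [hAL, ← Real.rpow_add_one hApos.ne' (ρ-1)]; norm_num
  have eB : B ^ ρ = BL * B := by
    rw [hBL, ← Real.rpow_add_one hBpos.ne' (ρ-1)]; norm_num
  have eA2 : A ^ (ρ - 2) = AL / A := by
    rw [hAL, ← Real.rpow_sub_one hApos.ne' (ρ-1)]; ring_nf
  have eB2 : B ^ (ρ - 2) = BL / B := by
    rw [hBL, ← Real.rpow_sub_one hBpos.ne' (ρ-1)]; ring_nf
  have key := core_ineq hBpos (by linarith : B ≤ A) (by linarith : 0 ≤ ρ - 1)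
    (by linarith : ρ - 1 ≤ 1)
  rw [← hAL, ← hBL] at key
  have hinner : ((AL + BL) + m * (ρ-1) * (AL/A - BL/B)) * (AL*A - BL*B) - m * ρ * (AL+BL)^2 ≤ 0 := by
    have hid : (((AL + BL) + m * (ρ-1) * (AL/A - BL/B)) * (AL*A - BL*B) - m * ρ * (AL+BL)^2) * (A^2 * B^2)
        = A*B*(A * B * (AL ^ 2 - BL ^ 2) - (ρ-1) * (A ^ 2 - B ^ 2) * (AL * BL)) := by
      have hAm : A = 1 + m := hA
      have hBm : B = 1 - m := hB
      field_simp
      rw [hAm, hBm]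
      ring
    have hX : A * B * (AL ^ 2 - BL ^ 2) - (ρ-1) * (A ^ 2 - B ^ 2) * (AL * BL) ≤ 0 := by
      linarith [key]
    have h6 : (((AL + BL) + m * (ρ-1) * (AL/A - BL/B)) * (AL*A - BL*B) - m * ρ * (AL+BL)^2) * (A^2 * B^2) ≤ 0 := by
      rw [hid]
      exact mul_nonpos_of_nonneg_of_nonpos (le_of_lt (mul_pos hApos hBpos)) hX
    have hc : (0:ℝ) < A^2*B^2 := by positivity
    have h7 : (((AL + BL) + m * (ρ-1) * (AL/A - BL/B)) * (AL*A - BL*B) - m * ρ * (AL+BL)^2) * (A^2*B^2) ≤ 0 * (A^2*B^2) := by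
      rw [zero_mul]; exact h6
    linarith [le_of_mul_le_mul_right h7 hc]
  have hpos : (0:ℝ) ≤ (1+ρ)^2 * ρ / 4 := by positivity
  have hgoal : (chi2 ρ m + m * chi3 ρ m) * chi1 ρ m - m * (chi2 ρ m)^2
      = ((1+ρ)^2 * ρ / 4) * (((AL + BL) + m * (ρ-1) * (AL/A - BL/B)) * (AL*A - BL*B) - m * ρ * (AL+BL)^2) := by
    unfold chi1 chi2 chi3
    rw [eA, eB, eA2, eB2]
    ring
  linarith [mul_nonpos_of_nonneg_of_nonpos hpos hinner, hgoal]

lemma hasDerivAt_Q {ρ m : ℝ} (hρ : 1 ≤ ρ) (h0 : 0 < m) (h1 : m < 1) :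
    HasDerivAt (fun m => m * chi2 ρ m / chi1 ρ m)
      (((chi2 ρ m + m * chi3 ρ m) * chi1 ρ m - m * chi2 ρ m * chi2 ρ m) / (chi1 ρ m)^2) m := by
  have hnum : HasDerivAt (fun m => m * chi2 ρ m) (chi2 ρ m + m * chi3 ρ m) m := by
    have := (hasDerivAt_id m).mul (hasDerivAt_chi2 hρ (by linarith) h1)
    exact this.congr_deriv (by simp)
  have hden := hasDerivAt_chi1 hρ (by linarith) h1
  have hne : chi1 ρ m ≠ 0 := (chi1_pos hρ h0 h1.le).ne'
  exact hnum.div hden hne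

lemma Q_anti {ρ : ℝ} (hρ1 : 1 ≤ ρ) (hρ2 : ρ ≤ 2) :
    AntitoneOn (fun m => m * chi2 ρ m / chi1 ρ m) (Set.Ioo (0:ℝ) 1) := by
  apply antitoneOn_of_deriv_nonpos (convex_Ioo 0 1)
  · intro m hm
    exact ((hasDerivAt_Q hρ1 hm.1 hm.2).differentiableAt).continuousAt.continuousWithinAt
  · rw [interior_Ioo]
    intro m hm
    exact ((hasDerivAt_Q hρ1 hm.1 hm.2).differentiableAt).differentiableWithinAt
  · rw [interior_Ioo]
    intro m hm
    rw [(hasDerivAt_Q hρ1 hm.1 hm.2).deriv]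
    apply div_nonpos_of_nonpos_of_nonneg
    · have := E_ineq hρ1 hρ2 hm.1 hm.2
      nlinarith [this]
    · positivity

lemma chi1_zero {ρ : ℝ} : chi1 ρ 0 = 0 := by unfold chi1; norm_num

/-- Key pointwise inequality for the slope derivative. -/
lemma slope_key {ρ e V : ℝ} (hρ1 : 1 ≤ ρ) (hρ2 : ρ ≤ 2) (he0 : 0 ≤ e) (he1 : e < 1)
    (hV0 : 0 < V) (hV1 : V < 1) :
    chi1 ρ (e*V) * chi2 ρ V ≤ e * chi2 ρ (e*V) * chi1 ρ V := by
  rcases eq_or_lt_of_le he0 with he | he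
  · rw [← he]; simp [chi1_zero]
  · have hu0 : 0 < e*V := mul_pos he hV0
    have huV : e*V < V := by nlinarith
    have hQ := Q_anti hρ1 hρ2 (Set.mem_Ioo.mpr ⟨hu0, by linarith⟩)
        (Set.mem_Ioo.mpr ⟨hV0, hV1⟩) huV.le
    -- hQ : V * chi2 V / chi1 V ≤ (e*V) * chi2 (e*V) / chi1 (e*V)
    have h1 : (0:ℝ) < chi1 ρ (e*V) := chi1_pos hρ1 hu0 (by linarith)
    have h2 : (0:ℝ) < chi1 ρ V := chi1_pos hρ1 hV0 hV1.le
    rw [div_le_div_iff₀ h2 h1] at hQ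
    -- V * chi2 V * chi1 (e*V) ≤ e*V*chi2 (e*V) * chi1 V
    nlinarith [hQ, hV0]


noncomputable def Vx (ρ x : ℝ) : ℝ :=
  ((1+x)^(1/(1+ρ)) - (1-x)^(1/(1+ρ))) / ((1+x)^(1/(1+ρ)) + (1-x)^(1/(1+ρ)))

section ident
variable {ρ : ℝ} (hρ : 1 ≤ ρ)
include hρ

lemma hr_pos : (0:ℝ) < 1 + ρ := by linarith

lemma rpow_inv_cancel {P : ℝ} (hP : 0 ≤ P) : (P ^ (1/(1+ρ))) ^ (1+ρ) = P := by
  rw [one_div]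
  exact Real.rpow_inv_rpow hP (by positivity)

lemma chi_pair {u1 u2 : ℝ} (h1 : 0 ≤ u1) (h2 : 0 ≤ u2) (h12 : 0 < u1 + u2) :
    chi ρ ((u1-u2)/(u1+u2)) * ((u1+u2)/2)^(1+ρ) = (u1^(1+ρ) + u2^(1+ρ))/2 := by
  have e1 : 1 + (u1-u2)/(u1+u2) = 2*u1/(u1+u2) := by field_simp; ring
  have e2 : 1 - (u1-u2)/(u1+u2) = 2*u2/(u1+u2) := by field_simp; ring
  unfold chi
  rw [e1, e2, Real.div_rpow (by linarith) h12.le, Real.div_rpow (by linarith) h12.le,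
    Real.div_rpow (by linarith) (by norm_num : (0:ℝ) ≤ 2),
    Real.mul_rpow (by norm_num : (0:ℝ) ≤ 2) h1, Real.mul_rpow (by norm_num : (0:ℝ) ≤ 2) h2]
  have hs : (0:ℝ) < (u1+u2)^(1+ρ) := Real.rpow_pos_of_pos h12 _
  have h2r : (0:ℝ) < (2:ℝ)^(1+ρ) := Real.rpow_pos_of_pos (by norm_num) _
  field_simp

lemma g_hom {c P Q : ℝ} (hc : 0 ≤ c) (hP : 0 ≤ P) (hQ : 0 ≤ Q) :
    ((1/2) * (c*P) ^ (1/(1+ρ)) + (1/2) * (c*Q) ^ (1/(1+ρ))) ^ (1+ρ)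
      = c * ((1/2) * P ^ (1/(1+ρ)) + (1/2) * Q ^ (1/(1+ρ))) ^ (1+ρ) := by
  rw [Real.mul_rpow hc hP, Real.mul_rpow hc hQ]
  have e : (1/2) * (c ^ (1/(1+ρ)) * P ^ (1/(1+ρ))) + (1/2) * (c ^ (1/(1+ρ)) * Q ^ (1/(1+ρ)))
      = c ^ (1/(1+ρ)) * ((1/2) * P ^ (1/(1+ρ)) + (1/2) * Q ^ (1/(1+ρ))) := by ring
  rw [e, Real.mul_rpow (by positivity) (by positivity), rpow_inv_cancel hρ hc]

lemma g_eq_pair {x : ℝ} :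
    g ρ x = (((1+x)^(1/(1+ρ)) + (1-x)^(1/(1+ρ)))/2) ^ (1+ρ) := by
  unfold g; congr 1; ring

/-- Identity 1 : `chi ρ (Vx ρ x) * g ρ x = 1` -/
lemma chi_Vx_g {x : ℝ} (hx0 : -1 < x) (hx1 : x ≤ 1) :
    chi ρ (Vx ρ x) * g ρ x = 1 := by
  set β := (1+x)^(1/(1+ρ)) with hβ
  set γ := (1-x)^(1/(1+ρ)) with hγ
  have hβp : 0 < β := Real.rpow_pos_of_pos (by linarith) _
  have hγp : 0 ≤ γ := Real.rpow_nonneg (by linarith) _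
  have hpair := chi_pair hρ hβp.le hγp (by linarith)
  rw [g_eq_pair hρ]
  unfold Vx
  rw [← hβ, ← hγ]
  rw [hpair, rpow_inv_cancel hρ (by linarith : (0:ℝ) ≤ 1+x),
    rpow_inv_cancel hρ (by linarith : (0:ℝ) ≤ 1-x)]
  ring
end ident

section ident2
variable {ρ : ℝ} (hρ : 1 ≤ ρ)
include hρ

set_option maxHeartbeats 1000000 in
/-- Identity 2 : `hfun ρ x z = g ρ x * g ρ z * chi ρ (Vx ρ z * Vx ρ x)` -/
lemma hfun_eq {x z : ℝ} (hx0 : 0 ≤ x) (hx1 : x ≤ 1) (hz0 : 0 ≤ z) (hz1 : z < 1) :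
    hfun ρ x z = g ρ x * g ρ z * chi ρ (Vx ρ z * Vx ρ x) := by
  have hxz1 : 0 < 1 + x*z := by nlinarith
  have hxz2 : 0 < 1 - x*z := by nlinarith
  set β := (1+x)^(1/(1+ρ)) with hβ
  set γ := (1-x)^(1/(1+ρ)) with hγ
  set lam := (1+z)^(1/(1+ρ)) with hlam
  set μ := (1-z)^(1/(1+ρ)) with hμ
  have hβp : 0 < β := Real.rpow_pos_of_pos (by linarith) _
  have hγp : 0 ≤ γ := Real.rpow_nonneg (by linarith) _
  have hlamp : 0 < lam := Real.rpow_pos_of_pos (by linarith) _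
  have hμp : 0 < μ := Real.rpow_pos_of_pos (by linarith) _
  set u1 := lam*β + μ*γ with hu1
  set u2 := μ*β + lam*γ with hu2
  have hu1p : 0 < u1 := by positivity
  have hu2p : 0 < u2 := by positivity
  have hw1 : (0:ℝ) ≤ (1+x)*(1+z) := by nlinarith
  have hw2 : (0:ℝ) ≤ (1-x)*(1-z) := by nlinarith
  have hw3 : (0:ℝ) ≤ (1+x)*(1-z) := by nlinarith
  have hw4 : (0:ℝ) ≤ (1-x)*(1+z) := by nlinarith
  -- term 1
  have m1a : 1 + (x+z)/(1+x*z) = ((1+x)*(1+z)) / (1+x*z) := by field_simp; ring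
  have m1b : 1 - (x+z)/(1+x*z) = ((1-x)*(1-z)) / (1+x*z) := by field_simp; ring
  have m2a : 1 + (x-z)/(1-x*z) = ((1+x)*(1-z)) / (1-x*z) := by field_simp; ring
  have m2b : 1 - (x-z)/(1-x*z) = ((1-x)*(1+z)) / (1-x*z) := by field_simp; ring
  have e1 : ((1+x)*(1+z))^(1/(1+ρ)) = β * lam := by
    rw [Real.mul_rpow (by linarith) (by linarith)]
  have e2 : ((1-x)*(1-z))^(1/(1+ρ)) = γ * μ := by
    rw [Real.mul_rpow (by linarith) (by linarith)]
  have e3 : ((1+x)*(1-z))^(1/(1+ρ)) = β * μ := by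
    rw [Real.mul_rpow (by linarith) (by linarith)]
  have e4 : ((1-x)*(1+z))^(1/(1+ρ)) = γ * lam := by
    rw [Real.mul_rpow (by linarith) (by linarith)]
  have hterm1 : g ρ ((x+z)/(1+x*z)) = (u1/2)^(1+ρ) / (1+x*z) := by
    unfold g
    rw [m1a, m1b]
    have d1 : (1+x)*(1+z)/(1+x*z) = (1+x*z)⁻¹ * ((1+x)*(1+z)) := by ring
    have d2 : (1-x)*(1-z)/(1+x*z) = (1+x*z)⁻¹ * ((1-x)*(1-z)) := by ring
    rw [d1, d2, g_hom hρ (by positivity) hw1 hw2, e1, e2]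
    have : (1/2) * (β*lam) + (1/2)*(γ*μ) = u1/2 := by rw [hu1]; ring
    rw [this, inv_mul_eq_div]
  have hterm2 : g ρ ((x-z)/(1-x*z)) = (u2/2)^(1+ρ) / (1-x*z) := by
    unfold g
    rw [m2a, m2b]
    have d1 : (1+x)*(1-z)/(1-x*z) = (1-x*z)⁻¹ * ((1+x)*(1-z)) := by ring
    have d2 : (1-x)*(1+z)/(1-x*z) = (1-x*z)⁻¹ * ((1-x)*(1+z)) := by ring
    rw [d1, d2, g_hom hρ (by positivity) hw3 hw4, e3, e4]
    have : (1/2) * (β*μ) + (1/2)*(γ*lam) = u2/2 := by rw [hu2]; ring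
    rw [this, inv_mul_eq_div]
  have hL : hfun ρ x z = ((u1/2)^(1+ρ) + (u2/2)^(1+ρ))/2 := by
    unfold hfun
    rw [hterm1, hterm2]
    rw [show (1/2) * (1+x*z) * ((u1/2)^(1+ρ)/(1+x*z)) = (u1/2)^(1+ρ)/2 by
      field_simp]
    rw [show (1/2) * (1-x*z) * ((u2/2)^(1+ρ)/(1-x*z)) = (u2/2)^(1+ρ)/2 by
      field_simp]
    ring
  -- right side
  have hVV : Vx ρ z * Vx ρ x = (u1-u2)/(u1+u2) := by
    unfold Vx
    rw [← hβ, ← hγ, ← hlam, ← hμ, div_mul_div_comm]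
    have n1 : (lam - μ) * (β - γ) = u1 - u2 := by rw [hu1, hu2]; ring
    have n2 : (lam + μ) * (β + γ) = u1 + u2 := by rw [hu1, hu2]; ring
    rw [n1, n2]
  have hpair := chi_pair hρ hu1p.le hu2p.le (by linarith)
  have hgg : g ρ x * g ρ z = ((u1+u2)/2)^(1+ρ) * (1/2)^(1+ρ) := by
    rw [g_eq_pair hρ, g_eq_pair hρ, ← hβ, ← hγ, ← hlam, ← hμ,
      ← Real.mul_rpow (by positivity) (by positivity),
      ← Real.mul_rpow (by positivity) (by norm_num : (0:ℝ) ≤ 1/2)]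
    congr 1
    rw [hu1, hu2]
    ring
  rw [hL, hVV, hgg]
  have hs : (0:ℝ) < ((u1+u2)/2)^(1+ρ) := Real.rpow_pos_of_pos (by positivity) _
  have hmul : ((u1+u2)/2)^(1+ρ) * (1/2)^(1+ρ) * chi ρ ((u1-u2)/(u1+u2))
      = (1/2)^(1+ρ) * ((u1^(1+ρ) + u2^(1+ρ))/2) := by
    rw [mul_comm (((u1+u2)/2)^(1+ρ)) ((1/2:ℝ)^(1+ρ)), mul_assoc]
    rw [mul_comm (((u1+u2)/2)^(1+ρ)) (chi ρ ((u1-u2)/(u1+u2))), hpair]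
  rw [hmul]
  have hu12 : (u1/2)^(1+ρ) = u1^(1+ρ) * (1/2)^(1+ρ) := by
    rw [← Real.mul_rpow hu1p.le (by norm_num)]
    congr 1; ring
  have hu22 : (u2/2)^(1+ρ) = u2^(1+ρ) * (1/2)^(1+ρ) := by
    rw [← Real.mul_rpow hu2p.le (by norm_num)]
    congr 1; ring
  rw [hu12, hu22]
  ring
end ident2


noncomputable def Vd (ρ x : ℝ) : ℝ :=
  (((1/(1+ρ))*(1+x)^(1/(1+ρ)-1) + (1/(1+ρ))*(1-x)^(1/(1+ρ)-1)) * ((1+x)^(1/(1+ρ)) + (1-x)^(1/(1+ρ)))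
    - ((1+x)^(1/(1+ρ)) - (1-x)^(1/(1+ρ))) * ((1/(1+ρ))*(1+x)^(1/(1+ρ)-1) - (1/(1+ρ))*(1-x)^(1/(1+ρ)-1)))
    / ((1+x)^(1/(1+ρ)) + (1-x)^(1/(1+ρ)))^2

section vx
variable {ρ x : ℝ} (hρ : 1 ≤ ρ)
include hρ

lemma denom_pos (h1 : -1 < x) (h2 : x ≤ 1) :
    0 < (1+x)^(1/(1+ρ)) + (1-x)^(1/(1+ρ)) := by
  have : (0:ℝ) < (1+x)^(1/(1+ρ)) := Real.rpow_pos_of_pos (by linarith) _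
  have : (0:ℝ) ≤ (1-x)^(1/(1+ρ)) := Real.rpow_nonneg (by linarith) _
  linarith

lemma hasDerivAt_Vx (h1 : -1 < x) (h2 : x < 1) :
    HasDerivAt (Vx ρ) (Vd ρ x) x := by
  have ha : HasDerivAt (fun x : ℝ => 1 + x) 1 x := by simpa using (hasDerivAt_id x).const_add 1
  have hb : HasDerivAt (fun x : ℝ => 1 - x) (-1) x := by simpa using (hasDerivAt_id x).const_sub 1
  have hA : (0:ℝ) < 1 + x := by linarith
  have hB : (0:ℝ) < 1 - x := by linarith
  have hβ := ha.rpow_const (p := 1/(1+ρ)) (Or.inl hA.ne')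
  have hγ := hb.rpow_const (p := 1/(1+ρ)) (Or.inl hB.ne')
  have hden := denom_pos hρ h1 h2.le
  have h := (hβ.sub hγ).div (hβ.add hγ) hden.ne'
  exact h.congr_deriv (by simp only [Pi.add_apply, Pi.sub_apply]; unfold Vd; ring)

lemma Vd_pos (h1 : -1 < x) (h2 : x < 1) : 0 < Vd ρ x := by
  have hA : (0:ℝ) < 1 + x := by linarith
  have hB : (0:ℝ) < 1 - x := by linarith
  have hβ : (0:ℝ) < (1+x)^(1/(1+ρ)) := Real.rpow_pos_of_pos hA _
  have hγ : (0:ℝ) < (1-x)^(1/(1+ρ)) := Real.rpow_pos_of_pos hB _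
  have hβd : (0:ℝ) < (1+x)^(1/(1+ρ)-1) := Real.rpow_pos_of_pos hA _
  have hγd : (0:ℝ) < (1-x)^(1/(1+ρ)-1) := Real.rpow_pos_of_pos hB _
  have ha : (0:ℝ) < 1/(1+ρ) := by positivity
  unfold Vd
  have hnum : (((1/(1+ρ))*(1+x)^(1/(1+ρ)-1) + (1/(1+ρ))*(1-x)^(1/(1+ρ)-1)) * ((1+x)^(1/(1+ρ)) + (1-x)^(1/(1+ρ)))
      - ((1+x)^(1/(1+ρ)) - (1-x)^(1/(1+ρ))) * ((1/(1+ρ))*(1+x)^(1/(1+ρ)-1) - (1/(1+ρ))*(1-x)^(1/(1+ρ)-1)))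
      = 2*(1/(1+ρ)) * ((1+x)^(1/(1+ρ)-1) * (1-x)^(1/(1+ρ)) + (1-x)^(1/(1+ρ)-1) * (1+x)^(1/(1+ρ))) := by
    ring
  rw [hnum]
  have hden := denom_pos hρ h1 h2.le
  positivity

lemma Vx_nonneg (h1 : 0 ≤ x) (h2 : x ≤ 1) : 0 ≤ Vx ρ x := by
  have key : (1-x)^(1/(1+ρ)) ≤ (1+x)^(1/(1+ρ)) :=
    Real.rpow_le_rpow (by linarith) (by linarith) (by positivity)
  have hden := denom_pos hρ (by linarith) h2
  unfold Vx
  apply div_nonneg (by linarith) hden.le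

lemma Vx_pos (h1 : 0 < x) (h2 : x ≤ 1) : 0 < Vx ρ x := by
  have key : (1-x)^(1/(1+ρ)) < (1+x)^(1/(1+ρ)) :=
    Real.rpow_lt_rpow (by linarith) (by linarith) (by positivity)
  have hden := denom_pos hρ (by linarith) h2
  unfold Vx
  apply div_pos (by linarith) hden

lemma Vx_gt_negone (h1 : -1 < x) (h2 : x ≤ 1) : -1 < Vx ρ x := by
  have hβ : (0:ℝ) < (1+x)^(1/(1+ρ)) := Real.rpow_pos_of_pos (by linarith) _
  have hγ : (0:ℝ) ≤ (1-x)^(1/(1+ρ)) := Real.rpow_nonneg (by linarith) _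
  have hden := denom_pos hρ h1 h2
  unfold Vx
  rw [lt_div_iff₀ hden]
  linarith

lemma Vx_lt_one (h1 : -1 < x) (h2 : x < 1) : Vx ρ x < 1 := by
  have hγ : (0:ℝ) < (1-x)^(1/(1+ρ)) := Real.rpow_pos_of_pos (by linarith) _
  have hden := denom_pos hρ h1 h2.le
  unfold Vx
  rw [div_lt_one hden]
  linarith

lemma Vx_le_one (h1 : -1 < x) (h2 : x ≤ 1) : Vx ρ x ≤ 1 := by
  have hγ : (0:ℝ) ≤ (1-x)^(1/(1+ρ)) := Real.rpow_nonneg (by linarith) _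
  have hden := denom_pos hρ h1 h2
  unfold Vx
  rw [div_le_one hden]
  linarith

lemma g_pos (h1 : -1 < x) (h2 : x ≤ 1) : 0 < g ρ x := by
  unfold g
  have hβ : (0:ℝ) < (1+x)^(1/(1+ρ)) := Real.rpow_pos_of_pos (by linarith) _
  have hγ : (0:ℝ) ≤ (1-x)^(1/(1+ρ)) := Real.rpow_nonneg (by linarith) _
  apply Real.rpow_pos_of_pos
  linarith

noncomputable def gd (ρ x : ℝ) : ℝ :=
  -(chi1 ρ (Vx ρ x) * Vd ρ x) / (chi ρ (Vx ρ x))^2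

lemma hasDerivAt_g (h1 : 0 < x) (h2 : x < 1) :
    HasDerivAt (g ρ) (gd ρ x) x := by
  have hV0 : 0 < Vx ρ x := Vx_pos hρ h1 h2.le
  have hV1 : Vx ρ x < 1 := Vx_lt_one hρ (by linarith) h2
  have hchi := hasDerivAt_chi hρ (by linarith : (-1:ℝ) < Vx ρ x) hV1
  have hvx := hasDerivAt_Vx hρ (by linarith) h2
  have hcomp : HasDerivAt (fun y => chi ρ (Vx ρ y)) (chi1 ρ (Vx ρ x) * Vd ρ x) x :=
    HasDerivAt.comp x hchi hvx
  have hne : chi ρ (Vx ρ x) ≠ 0 := (chi_pos hρ (by linarith) hV1.le).ne'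
  have hinv := hcomp.inv hne
  have heq : (fun y => (chi ρ (Vx ρ y))⁻¹) =ᶠ[nhds x] g ρ := by
    filter_upwards [Ioo_mem_nhds (by linarith : (-1:ℝ) < x) h2] with y hy
    have := chi_Vx_g hρ (hy.1) hy.2.le
    exact (eq_inv_of_mul_eq_one_left (by rw [mul_comm]; exact this)).symm
  exact (hinv.congr_of_eventuallyEq heq.symm)

end vx

section gmono
variable {ρ : ℝ} (hρ : 1 ≤ ρ)
include hρ

lemma gd_neg {x : ℝ} (h1 : 0 < x) (h2 : x < 1) : gd ρ x < 0 := by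
  have hV0 : 0 < Vx ρ x := Vx_pos hρ h1 h2.le
  have hV1 : Vx ρ x < 1 := Vx_lt_one hρ (by linarith) h2
  have h3 := chi1_pos hρ hV0 hV1.le
  have h4 := Vd_pos hρ (by linarith : (-1:ℝ) < x) h2
  have h5 := chi_pos hρ (by linarith : (-1:ℝ) < Vx ρ x) hV1.le
  unfold gd
  apply div_neg_of_neg_of_pos
  · have : 0 < chi1 ρ (Vx ρ x) * Vd ρ x := by positivity
    linarith
  · positivity

lemma g_contOn : ContinuousOn (g ρ) (Set.Icc 0 1) := by
  have h1 : ContinuousOn (fun x : ℝ => (1+x)^(1/(1+ρ))) (Set.Icc 0 1) := by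
    apply ContinuousOn.rpow_const (by fun_prop)
    intro x hx
    exact Or.inl (by rcases hx with ⟨h,_⟩; intro hc; nlinarith [hc])
  have h2 : ContinuousOn (fun x : ℝ => (1-x)^(1/(1+ρ))) (Set.Icc 0 1) := by
    apply ContinuousOn.rpow_const (by fun_prop)
    intro x hx
    right; positivity
  apply ContinuousOn.rpow_const ((h1.const_smul (1/2:ℝ)).add (h2.const_smul (1/2:ℝ)))
  intro x hx
  left
  have hb : (0:ℝ) < (1+x)^(1/(1+ρ)) := Real.rpow_pos_of_pos (by rcases hx with ⟨h,_⟩; linarith) _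
  have hc : (0:ℝ) ≤ (1-x)^(1/(1+ρ)) := Real.rpow_nonneg (by rcases hx with ⟨_,h⟩; linarith) _
  show (1/2:ℝ) * (1+x)^(1/(1+ρ)) + (1/2:ℝ) * (1-x)^(1/(1+ρ)) ≠ 0
  positivity

lemma g_strictAnti : StrictAntiOn (g ρ) (Set.Icc 0 1) := by
  apply strictAntiOn_of_deriv_neg (convex_Icc 0 1) (g_contOn hρ)
  rw [interior_Icc]
  intro x hx
  rw [(hasDerivAt_g hρ hx.1 hx.2).deriv]
  exact gd_neg hρ hx.1 hx.2

lemma g_zero : g ρ 0 = 1 := by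
  unfold g
  norm_num

lemma g_one : g ρ 1 = 2^(-ρ) := by
  unfold g
  have h1 : (1:ℝ) - 1 = 0 := by norm_num
  have hz : ((0:ℝ))^(1/(1+ρ)) = 0 := Real.zero_rpow (by positivity)
  rw [h1, hz]
  have h2 : (1/2 : ℝ) * (1+1)^(1/(1+ρ)) + (1/2)*0 = 2^(1/(1+ρ)-1) := by
    rw [Real.rpow_sub_one (by norm_num : (2:ℝ) ≠ 0)]
    norm_num
    ring
  rw [h2, ← Real.rpow_mul (by norm_num : (0:ℝ) ≤ 2)]
  congr 1
  field_simp
  ring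

end gmono

/-- The slope function: value of `deriv F` at `t` with `V = Vx ρ (ginv t)`. -/
noncomputable def slopeF (ρ gz e V : ℝ) : ℝ :=
  gz * (chi ρ (e*V) - e * chi1 ρ (e*V) * chi ρ V / chi1 ρ V)

section slope
variable {ρ gz e : ℝ} (hρ1 : 1 ≤ ρ) (hρ2 : ρ ≤ 2) (hgz : 0 ≤ gz) (he0 : 0 ≤ e) (he1 : e < 1)
include hρ1 hρ2 hgz he0 he1

lemma slope_hasDeriv {V : ℝ} (hV0 : 0 < V) (hV1 : V < 1) :
    HasDerivAt (slopeF ρ gz e)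
      (gz * (chi1 ρ (e*V) * e -
        ((e * (chi2 ρ (e*V) * e) * chi ρ V + e * chi1 ρ (e*V) * chi1 ρ V) * chi1 ρ V
          - e * chi1 ρ (e*V) * chi ρ V * chi2 ρ V) / (chi1 ρ V)^2)) V := by
  have heV0 : (0:ℝ) ≤ e*V := mul_nonneg he0 hV0.le
  have heV1 : e*V < 1 := by nlinarith
  have hmul : HasDerivAt (fun V : ℝ => e*V) e V := by simpa using (hasDerivAt_id V).const_mul e
  have h1 : HasDerivAt (fun V => chi ρ (e*V)) (chi1 ρ (e*V) * e) V :=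
    HasDerivAt.comp V (hasDerivAt_chi hρ1 (by linarith) heV1) hmul
  have h2 : HasDerivAt (fun V => chi1 ρ (e*V)) (chi2 ρ (e*V) * e) V :=
    HasDerivAt.comp V (hasDerivAt_chi1 hρ1 (by linarith) heV1) hmul
  have h3 : HasDerivAt (fun V => e * chi1 ρ (e*V) * chi ρ V)
      (e * (chi2 ρ (e*V) * e) * chi ρ V + e * chi1 ρ (e*V) * chi1 ρ V) V :=
    (h2.const_mul e).mul (hasDerivAt_chi hρ1 (by linarith) hV1)
  have hne : chi1 ρ V ≠ 0 := (chi1_pos hρ1 hV0 hV1.le).ne'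
  have h4 := h3.div (hasDerivAt_chi1 hρ1 (by linarith) hV1) hne
  exact (h1.sub h4).const_mul gz

lemma slope_anti : AntitoneOn (slopeF ρ gz e) (Set.Ioo (0:ℝ) 1) := by
  apply antitoneOn_of_deriv_nonpos (convex_Ioo 0 1)
  · intro V hV
    exact ((slope_hasDeriv hρ1 hρ2 hgz he0 he1 hV.1 hV.2).differentiableAt).continuousAt.continuousWithinAt
  · rw [interior_Ioo]
    intro V hV
    exact ((slope_hasDeriv hρ1 hρ2 hgz he0 he1 hV.1 hV.2).differentiableAt).differentiableWithinAt
  · rw [interior_Ioo]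
    intro V hV
    obtain ⟨hV0, hV1⟩ := hV
    rw [(slope_hasDeriv hρ1 hρ2 hgz he0 he1 hV0 hV1).deriv]
    have heV0 : (0:ℝ) ≤ e*V := mul_nonneg he0 hV0.le
    have heV1 : e*V < 1 := by nlinarith
    have hchiV : 0 < chi ρ V := chi_pos hρ1 (by linarith) hV1.le
    have hchi1V : 0 < chi1 ρ V := chi1_pos hρ1 hV0 hV1.le
    have key := slope_key hρ1 hρ2 he0 he1 hV0 hV1
    have hfact : chi1 ρ (e*V) * e -
        ((e * (chi2 ρ (e*V) * e) * chi ρ V + e * chi1 ρ (e*V) * chi1 ρ V) * chi1 ρ V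
          - e * chi1 ρ (e*V) * chi ρ V * chi2 ρ V) / (chi1 ρ V)^2
        = e * chi ρ V * (chi1 ρ (e*V) * chi2 ρ V - e * chi2 ρ (e*V) * chi1 ρ V) / (chi1 ρ V)^2 := by
      field_simp
      ring
    rw [hfact]
    apply mul_nonpos_of_nonneg_of_nonpos hgz
    apply div_nonpos_of_nonpos_of_nonneg _ (by positivity)
    apply mul_nonpos_of_nonneg_of_nonpos (by positivity)
    linarith
end slope

section cont
variable {ρ : ℝ} (hρ : 1 ≤ ρ)
include hρ

lemma Vx_contOn : ContinuousOn (Vx ρ) (Set.Icc 0 1) := by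
  have h1 : ContinuousOn (fun x : ℝ => (1+x)^(1/(1+ρ))) (Set.Icc 0 1) := by
    apply ContinuousOn.rpow_const (by fun_prop)
    intro x hx
    exact Or.inl (by intro hcon; nlinarith [hx.1])
  have h2 : ContinuousOn (fun x : ℝ => (1-x)^(1/(1+ρ))) (Set.Icc 0 1) := by
    apply ContinuousOn.rpow_const (by fun_prop)
    intro x hx
    right; positivity
  exact (h1.sub h2).div (h1.add h2) (fun x hx => (denom_pos hρ (by linarith [hx.1]) hx.2).ne')

lemma Vx_strictMono : StrictMonoOn (Vx ρ) (Set.Icc 0 1) := by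
  apply strictMonoOn_of_deriv_pos (convex_Icc 0 1) (Vx_contOn hρ)
  rw [interior_Icc]
  intro x hx
  rw [(hasDerivAt_Vx hρ (by linarith [hx.1]) hx.2).deriv]
  exact Vd_pos hρ (by linarith [hx.1]) hx.2

lemma chi_contOn : ContinuousOn (chi ρ) (Set.Icc 0 1) := by
  have h1 : ContinuousOn (fun V : ℝ => (1+V)^(1+ρ)) (Set.Icc 0 1) := by
    apply ContinuousOn.rpow_const (by fun_prop)
    intro V hV
    exact Or.inl (by intro hcon; nlinarith [hV.1])
  have h2 : ContinuousOn (fun V : ℝ => (1-V)^(1+ρ)) (Set.Icc 0 1) := by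
    apply ContinuousOn.rpow_const (by fun_prop)
    intro V hV
    right; positivity
  exact (h1.add h2).div_const 2

/-- continuity of an inverse function on a compact interval -/
lemma ginv_contOn {c : ℝ} (hc0 : 0 < c) (hc1 : c < 1) (ginv : ℝ → ℝ)
    (hgc : ContinuousOn (g ρ) (Set.Icc 0 1))
    (hmem : ∀ t ∈ Set.Icc c 1, ginv t ∈ Set.Icc (0:ℝ) 1)
    (hleft : ∀ u ∈ Set.Icc (0:ℝ) 1, ginv (g ρ u) = u)
    (hright : ∀ t ∈ Set.Icc c 1, g ρ (ginv t) = t) :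
    ContinuousOn ginv (Set.Icc c 1) := by
  haveI : CompactSpace (Set.Icc (0:ℝ) 1) := isCompact_iff_compactSpace.mp isCompact_Icc
  set Φ : Set.Icc (0:ℝ) 1 → ℝ := fun x => g ρ x with hΦ
  have hΦc : Continuous Φ := hgc.restrict
  have hΦinj : Function.Injective Φ := by
    intro a b hab
    have h1 := hleft a.1 a.2
    have h2 := hleft b.1 b.2
    apply Subtype.ext
    have : ginv (g ρ ↑a) = ginv (g ρ ↑b) := by
      show ginv (Φ a) = ginv (Φ b)
      rw [hab]
    rw [h1, h2] at this
    exact this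
  have hemb := hΦc.isClosedEmbedding hΦinj
  set u : ℝ → Set.Icc (0:ℝ) 1 := fun t => Set.projIcc 0 1 zero_le_one (ginv t) with hu
  have hucomp : ContinuousOn (Φ ∘ u) (Set.Icc c 1) := by
    apply ContinuousOn.congr (continuousOn_id' _)
    intro t ht
    show Φ (u t) = t
    rw [hu, hΦ]
    simp only [Set.projIcc_of_mem zero_le_one (hmem t ht)]
    exact hright t ht
  have hucont : ContinuousOn u (Set.Icc c 1) :=
    (hemb.isEmbedding.continuousOn_iff.mpr hucomp)
  have : ContinuousOn (fun t => ((u t : ℝ))) (Set.Icc c 1) :=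
    continuous_subtype_val.comp_continuousOn hucont
  apply this.congr
  intro t ht
  rw [hu]
  simp only [Set.projIcc_of_mem zero_le_one (hmem t ht)]
end cont


theorem H_convex (ρ : ℝ) (hρ : ρ ∈ Set.Icc (1:ℝ) 2)
    (z : ℝ) (hz : z ∈ Set.Ico (0:ℝ) 1)
    (ginv : ℝ → ℝ)
    (hginv_mem : ∀ t ∈ Set.Icc ((2:ℝ)^(-ρ)) 1, ginv t ∈ Set.Icc (0:ℝ) 1)
    (hginv_left : ∀ u ∈ Set.Icc (0:ℝ) 1, ginv (g ρ u) = u)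
    (hginv_right : ∀ t ∈ Set.Icc ((2:ℝ)^(-ρ)) 1, g ρ (ginv t) = t) :
    ConvexOn ℝ (Set.Icc ((2:ℝ)^(-ρ)) 1) (fun t => hfun ρ (ginv t) z) := by
  obtain ⟨hρ1, hρ2⟩ := hρ
  obtain ⟨hz0, hz1⟩ := hz
  set c : ℝ := (2:ℝ)^(-ρ) with hc
  have hc0 : 0 < c := Real.rpow_pos_of_pos (by norm_num) _
  have hc1 : c < 1 := by
    rw [hc]
    apply Real.rpow_lt_one_of_one_lt_of_neg (by norm_num) (by linarith)
  set e : ℝ := Vx ρ z with he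
  set gz : ℝ := g ρ z with hgze
  have hgz : 0 < gz := g_pos hρ1 (by linarith) hz1.le
  have he0 : 0 ≤ e := Vx_nonneg hρ1 hz0 hz1.le
  have he1 : e < 1 := Vx_lt_one hρ1 (by linarith) hz1
  -- ginv is antitone on [c,1]
  have hginv_anti : AntitoneOn ginv (Set.Icc c 1) := by
    intro t1 ht1 t2 ht2 h12
    by_contra hcon
    push_neg at hcon
    have h1m := hginv_mem t1 ht1
    have h2m := hginv_mem t2 ht2
    have := g_strictAnti hρ1 h1m h2m hcon
    rw [hginv_right t1 ht1, hginv_right t2 ht2] at this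
    linarith
  -- ginv maps interior to interior
  have hmaps : ∀ t ∈ Set.Ioo c 1, ginv t ∈ Set.Ioo (0:ℝ) 1 := by
    intro t ht
    have hm := hginv_mem t (Set.mem_Icc.mpr ⟨ht.1.le, ht.2.le⟩)
    have hgt := hginv_right t (Set.mem_Icc.mpr ⟨ht.1.le, ht.2.le⟩)
    constructor
    · rcases eq_or_lt_of_le hm.1 with h | h
      · exfalso
        rw [← h] at hgt
        rw [g_zero hρ1] at hgt
        linarith [ht.2]
      · exact h
    · rcases eq_or_lt_of_le hm.2 with h | h
      · exfalso
        rw [h] at hgt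
        rw [g_one hρ1] at hgt
        rw [← hgt] at ht
        exact lt_irrefl _ ht.1
      · exact h
  -- continuity of ginv on [c,1]
  have hginv_cont : ContinuousOn ginv (Set.Icc c 1) :=
    ginv_contOn hρ1 hc0 hc1 ginv (g_contOn hρ1) hginv_mem hginv_left hginv_right
  -- the function F agrees with the nice formula on [c,1]
  have hFeq : ∀ t ∈ Set.Icc c 1, hfun ρ (ginv t) z
      = gz * (t * chi ρ (e * Vx ρ (ginv t))) := by
    intro t ht
    have hm := hginv_mem t ht
    rw [hfun_eq hρ1 hm.1 hm.2 hz0 hz1, hginv_right t ht]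
    ring
  -- derivative of F at interior points
  have hFderiv : ∀ t ∈ Set.Ioo c 1, HasDerivAt (fun t => hfun ρ (ginv t) z)
      (slopeF ρ gz e (Vx ρ (ginv t))) t := by
    intro t ht
    obtain ⟨hx0, hx1⟩ := hmaps t ht
    set x : ℝ := ginv t with hx
    set V : ℝ := Vx ρ x with hV
    have hV0 : 0 < V := Vx_pos hρ1 hx0 hx1.le
    have hV1 : V < 1 := Vx_lt_one hρ1 (by linarith) hx1
    have heV0 : 0 ≤ e * V := mul_nonneg he0 hV0.le
    have heV1 : e * V < 1 := by nlinarith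
    have hgd := gd_neg hρ1 hx0 hx1
    have hcont_at : ContinuousAt ginv t :=
      hginv_cont.continuousAt (Icc_mem_nhds ht.1 ht.2)
    have hfg : ∀ᶠ t' in nhds t, g ρ (ginv t') = t' := by
      filter_upwards [Ioo_mem_nhds ht.1 ht.2] with t' ht'
      exact hginv_right t' (Set.mem_Icc.mpr ⟨ht'.1.le, ht'.2.le⟩)
    have hginv_d : HasDerivAt ginv (gd ρ x)⁻¹ t :=
      HasDerivAt.of_local_left_inverse hcont_at (hasDerivAt_g hρ1 hx0 hx1) hgd.ne hfg
    have hVcomp : HasDerivAt (fun t => Vx ρ (ginv t)) (Vd ρ x * (gd ρ x)⁻¹) t :=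
      HasDerivAt.comp t (hasDerivAt_Vx hρ1 (by linarith) hx1) hginv_d
    have hchicomp : HasDerivAt (fun t => chi ρ (e * Vx ρ (ginv t)))
        (chi1 ρ (e*V) * (e * (Vd ρ x * (gd ρ x)⁻¹))) t := by
      have hmul : HasDerivAt (fun t => e * Vx ρ (ginv t)) (e * (Vd ρ x * (gd ρ x)⁻¹)) t :=
        hVcomp.const_mul e
      exact HasDerivAt.comp t (hasDerivAt_chi hρ1 (by linarith) heV1) hmul
    have hprod : HasDerivAt (fun t => gz * (t * chi ρ (e * Vx ρ (ginv t))))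
        (gz * (1 * chi ρ (e*V) + t * (chi1 ρ (e*V) * (e * (Vd ρ x * (gd ρ x)⁻¹))))) t :=
      ((hasDerivAt_id t).mul hchicomp).const_mul gz
    have heqF : (fun t => gz * (t * chi ρ (e * Vx ρ (ginv t))))
        =ᶠ[nhds t] (fun t => hfun ρ (ginv t) z) := by
      filter_upwards [Ioo_mem_nhds ht.1 ht.2] with t' ht'
      exact (hFeq t' (Set.mem_Icc.mpr ⟨ht'.1.le, ht'.2.le⟩)).symm
    have hfin := hprod.congr_of_eventuallyEq heqF.symm
    refine hfin.congr_deriv ?_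
    -- value equality: slopeF = the computed derivative
    have hchiV : 0 < chi ρ V := chi_pos hρ1 (by linarith) hV1.le
    have hchi1V : 0 < chi1 ρ V := chi1_pos hρ1 hV0 hV1.le
    have hVd := Vd_pos hρ1 (by linarith : (-1:ℝ) < x) hx1
    have ht_eq : t = (chi ρ V)⁻¹ := by
      have h := chi_Vx_g hρ1 (x := x) (by linarith) hx1.le
      rw [← hV] at h
      rw [hginv_right t (Set.mem_Icc.mpr ⟨ht.1.le, ht.2.le⟩)] at h
      field_simp at h ⊢
      linarith [h]
    have hgd_eq : gd ρ x = -(chi1 ρ V * Vd ρ x) / (chi ρ V)^2 := by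
      unfold gd
      rw [← hV]
    rw [ht_eq, hgd_eq]
    unfold slopeF
    field_simp
    ring
  -- main convexity
  apply MonotoneOn.convexOn_of_deriv (convex_Icc c 1)
  · -- continuity
    apply ContinuousOn.congr _ hFeq
    apply ContinuousOn.mul continuousOn_const
    apply ContinuousOn.mul (continuousOn_id' _)
    apply (chi_contOn hρ1).comp
    · apply ContinuousOn.mul continuousOn_const
      apply (Vx_contOn hρ1).comp hginv_cont hginv_mem
    · intro t ht
      have hm := hginv_mem t ht
      have hV0 := Vx_nonneg hρ1 hm.1 hm.2
      have hV1 := Vx_le_one hρ1 (by linarith [hm.1]) hm.2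
      constructor
      · exact mul_nonneg he0 hV0
      · exact mul_le_one₀ he1.le hV0 hV1
  · -- differentiability
    rw [interior_Icc]
    intro t ht
    exact ((hFderiv t ht).differentiableAt).differentiableWithinAt
  · -- monotone deriv
    rw [interior_Icc]
    intro t1 ht1 t2 ht2 h12
    rw [(hFderiv t1 ht1).deriv, (hFderiv t2 ht2).deriv]
    have hx1m := hmaps t1 ht1
    have hx2m := hmaps t2 ht2
    have hxord : ginv t2 ≤ ginv t1 :=
      hginv_anti (Set.mem_Icc.mpr ⟨ht1.1.le, ht1.2.le⟩) (Set.mem_Icc.mpr ⟨ht2.1.le, ht2.2.le⟩) h12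
    have hVord : Vx ρ (ginv t2) ≤ Vx ρ (ginv t1) := by
      rcases eq_or_lt_of_le hxord with h | h
      · rw [h]
      · exact (Vx_strictMono hρ1 (Set.mem_Icc.mpr ⟨hx2m.1.le, hx2m.2.le⟩)
          (Set.mem_Icc.mpr ⟨hx1m.1.le, hx1m.2.le⟩) h).le
    have hm1 : Vx ρ (ginv t1) ∈ Set.Ioo (0:ℝ) 1 :=
      ⟨Vx_pos hρ1 hx1m.1 hx1m.2.le, Vx_lt_one hρ1 (by linarith [hx1m.1]) hx1m.2⟩
    have hm2 : Vx ρ (ginv t2) ∈ Set.Ioo (0:ℝ) 1 :=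
      ⟨Vx_pos hρ1 hx2m.1 hx2m.2.le, Vx_lt_one hρ1 (by linarith [hx2m.1]) hx2m.2⟩
    exact slope_anti hρ1 hρ2 hgz.le he0 he1 hm2 hm1 hVord
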